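/- Let g : D → D be holomorphic on the open unit disc with w, g(w) ∈ D. If |g(w)| > |w|, then 2|g(w) - w| / |1 - w·conj(g(w))| ≥ 1 / ( (1 - |g(w)|)/(|g(w)| - |w|) + 1/2 ). -/

import Mathlib

theorem stmt2 (g : ℂ → ℂ) (hd : DifferentiableOn ℂ g (Metric.ball 0 1))
    (hm : Set.MapsTo g (Metric.ball 0 1) (Metric.ball 0 1))
    (w : ℂ) (hw : w ∈ Metric.ball (0 : ℂ) 1) (hgt : ‖w‖ < ‖g w‖) :
    2 * ‖g w - w‖ / ‖(1 : ℂ) - w * (starRingEnd ℂ) (g w)‖ ≥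
      1 / ((1 - ‖g w‖) / (‖g w‖ - ‖w‖) + 1 / 2) := by
  have hb1 : ‖g w‖ < 1 := by
    have := hm hw
    simpa [Metric.mem_ball, dist_eq_norm] using this
  set a := ‖w‖ with ha_def
  set b := ‖g w‖ with hb_def
  set N := ‖g w - w‖ with hN_def
  set D := ‖(1 : ℂ) - w * (starRingEnd ℂ) (g w)‖ with hD_def
  have ha0 : 0 ≤ a := norm_nonneg _
  have hN : b - a ≤ N := by
    simpa using norm_sub_norm_le (g w) w
  -- identity bound for D
  have hid : (1 : ℂ) - w * (starRingEnd ℂ) (g w)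
      = ((1 : ℂ) - g w * (starRingEnd ℂ) (g w)) + (starRingEnd ℂ) (g w) * (g w - w) := by
    ring
  have hD_le : D ≤ (1 - b ^ 2) + b * N := by
    rw [hD_def, hid]
    have h1 : ‖(1 : ℂ) - g w * (starRingEnd ℂ) (g w)‖ = 1 - b ^ 2 := by
      rw [Complex.mul_conj]
      have hsq : Complex.normSq (g w) = b ^ 2 := by
        rw [hb_def, ← Complex.sq_norm]
      have hcast : ((1 : ℂ) - (Complex.normSq (g w) : ℂ)) = ((1 - b ^ 2 : ℝ) : ℂ) := by
        rw [hsq]; push_cast; ring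
      rw [hcast, Complex.norm_real, Real.norm_eq_abs, abs_of_nonneg (by nlinarith)]
    have h2 : ‖(starRingEnd ℂ) (g w) * (g w - w)‖ = b * N := by
      rw [norm_mul, RCLike.norm_conj]
    calc ‖((1 : ℂ) - g w * (starRingEnd ℂ) (g w)) + (starRingEnd ℂ) (g w) * (g w - w)‖
        ≤ ‖(1 : ℂ) - g w * (starRingEnd ℂ) (g w)‖ + ‖(starRingEnd ℂ) (g w) * (g w - w)‖ :=
          norm_add_le _ _
      _ = (1 - b ^ 2) + b * N := by rw [h1, h2]
  have hD_pos : 0 < D := by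
    have h3 : ‖w * (starRingEnd ℂ) (g w)‖ = a * b := by
      rw [norm_mul, RCLike.norm_conj]
    have := norm_sub_norm_le (1 : ℂ) (w * (starRingEnd ℂ) (g w))
    rw [norm_one, h3] at this
    have hab : a * b < 1 := by nlinarith
    rw [hD_def] at *
    linarith
  have hba : 0 < b - a := by linarith
  have hR : 0 < (1 - b) / (b - a) + 1 / 2 := by
    have : 0 < (1 - b) / (b - a) := div_pos (by linarith) hba
    linarith
  rw [ge_iff_le, div_le_div_iff₀ hR hD_pos]
  have hNa : 0 ≤ N := norm_nonneg _
  have key : D * (b - a) ≤ N * (2 - a - b) := by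
    nlinarith [mul_nonneg (sub_nonneg.2 hN) (by nlinarith : (0:ℝ) ≤ (1 - b^2) + (1-a)*(1-b)),
      mul_nonneg (le_of_lt hba) (mul_nonneg (by linarith : (0:ℝ) ≤ 1 - a) (by linarith : (0:ℝ) ≤ 1 - b))]
  have hRe : (1 - b) / (b - a) + 1 / 2 = (2 - a - b) / (2 * (b - a)) := by
    field_simp; ring
  rw [hRe, ← mul_div_assoc, le_div_iff₀ (by linarith)]
  nlinarith
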